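/- For all integers i, j with 0 ≤ i < j, the double sum ∑_{k=0}^{i} ∑_{l=0}^{j} (-1)^{k+l} * C(i,k) * C(j,l) * (k+l+4)! / ((k+l+4) * (k+3)! * (l+3)!) equals 0. -/

import Mathlib

open Finset

private lemma aux1 (j b : ℕ) (h : b < j) :
    ∑ l ∈ Finset.range (j + 1), (-1 : ℚ) ^ l * (j.choose l) * (l.choose b) = 0 := by
  have hsub : Finset.Ico b (j + 1) ⊆ Finset.range (j + 1) := by
    intro x hx
    simp only [Finset.mem_Ico] at hx
    simp [Finset.mem_range]; omega
  rw [← Finset.sum_subset hsub]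
  · rw [Finset.sum_Ico_eq_sum_range]
    have hkey : ∀ m ∈ Finset.range (j + 1 - b),
        (-1 : ℚ) ^ (b + m) * (j.choose (b + m)) * ((b + m).choose b)
          = ((-1 : ℚ) ^ b * (j.choose b)) * ((-1 : ℚ) ^ m * ((j - b).choose m)) := by
      intro m hm
      simp only [Finset.mem_range] at hm
      have hle1 : b + m ≤ j := by omega
      have hle2 : b ≤ b + m := Nat.le_add_right _ _
      have := Nat.choose_mul (n := j) hle2
      have hsimp : b + m - b = m := by omega
      rw [hsimp] at this
      have : ((j.choose (b + m) : ℚ)) * ((b + m).choose b) = (j.choose b : ℚ) * ((j - b).choose m) := by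
        exact_mod_cast congrArg (Nat.cast : ℕ → ℚ) this
      rw [pow_add]
      linear_combination ((-1:ℚ)^b * (-1:ℚ)^m) * this
    rw [Finset.sum_congr rfl hkey, ← Finset.mul_sum]
    have hne : j - b ≠ 0 := by omega
    have hz : ∑ m ∈ Finset.range (j + 1 - b), (-1 : ℚ) ^ m * ((j - b).choose m) = 0 := by
      have := Int.alternating_sum_range_choose_of_ne (n := j - b) hne
      have hrange : j + 1 - b = j - b + 1 := by omega
      rw [hrange]
      exact_mod_cast this
    rw [hz, mul_zero]
  · intro x hx hnx
    have : x.choose b = 0 := by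
      apply Nat.choose_eq_zero_of_lt
      simp only [Finset.mem_Ico, Finset.mem_range] at hx hnx
      omega
    rw [this]; norm_num

private lemma aux2 (j k : ℕ) (h : k < j) :
    ∑ l ∈ Finset.range (j + 1), (-1 : ℚ) ^ l * (j.choose l) * ((k + 3 + l).choose k) = 0 := by
  have hv : ∀ l, ((k + 3 + l).choose k : ℚ)
      = ∑ ij ∈ Finset.HasAntidiagonal.antidiagonal k, ((k + 3).choose ij.1 : ℚ) * (l.choose ij.2) := by
    intro l
    rw [Nat.add_choose_eq]
    push_cast; ring
  calc ∑ l ∈ Finset.range (j + 1), (-1 : ℚ) ^ l * (j.choose l) * ((k + 3 + l).choose k)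
      = ∑ l ∈ Finset.range (j + 1), ∑ ij ∈ Finset.HasAntidiagonal.antidiagonal k,
          ((k + 3).choose ij.1 : ℚ) * ((-1 : ℚ) ^ l * (j.choose l) * (l.choose ij.2)) := by
        apply Finset.sum_congr rfl
        intro l _
        rw [hv l, Finset.mul_sum]
        apply Finset.sum_congr rfl
        intro ij _
        ring
    _ = ∑ ij ∈ Finset.HasAntidiagonal.antidiagonal k, ((k + 3).choose ij.1 : ℚ) *
          (∑ l ∈ Finset.range (j + 1), (-1 : ℚ) ^ l * (j.choose l) * (l.choose ij.2)) := by
        rw [Finset.sum_comm]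
        apply Finset.sum_congr rfl
        intro ij _
        rw [Finset.mul_sum]
    _ = 0 := by
        apply Finset.sum_eq_zero
        intro ij hij
        rw [Finset.HasAntidiagonal.mem_antidiagonal] at hij
        rw [aux1 j ij.2 (by omega), mul_zero]

theorem stmt7 (i j : ℕ) (hij : i < j) :
    ∑ k ∈ Finset.range (i + 1), ∑ l ∈ Finset.range (j + 1),
      (-1 : ℚ) ^ (k + l) * (i.choose k) * (j.choose l) *
        (Nat.factorial (k + l + 4)) /
        ((k + l + 4) * (Nat.factorial (k + 3)) * (Nat.factorial (l + 3))) = 0 := by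
  apply Finset.sum_eq_zero
  intro k hk
  simp only [Finset.mem_range] at hk
  have hterm : ∀ l ∈ Finset.range (j + 1),
      (-1 : ℚ) ^ (k + l) * (i.choose k) * (j.choose l) *
        (Nat.factorial (k + l + 4)) /
        ((k + l + 4) * (Nat.factorial (k + 3)) * (Nat.factorial (l + 3)))
      = ((-1 : ℚ) ^ k * (i.choose k) / ((k + 1) * (k + 2) * (k + 3))) *
          ((-1 : ℚ) ^ l * (j.choose l) * ((k + 3 + l).choose k)) := by
    intro l _
    have h1 : ((k + l + 4).factorial : ℚ)
        = (k + l + 4) * ((k + 3 + l).choose k) * k.factorial * (l + 3).factorial := by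
      have hle : k ≤ k + l + 3 := by omega
      have hmf := Nat.choose_mul_factorial_mul_factorial hle
      have hsub : k + l + 3 - k = l + 3 := by omega
      rw [hsub] at hmf
      have hidx : k + 3 + l = k + l + 3 := by omega
      have hfac : (k + l + 4).factorial = (k + l + 4) * (k + l + 3).factorial := rfl
      rw [hfac, hidx, ← hmf]
      push_cast; ring
    have h2 : ((k + 3).factorial : ℚ) = (k + 3) * (k + 2) * (k + 1) * k.factorial := by
      show (((k + 2) + 1).factorial : ℚ) = _
      rw [Nat.factorial_succ, Nat.factorial_succ, Nat.factorial_succ]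
      push_cast; ring
    rw [h1, h2, pow_add]
    have hk1 : (k : ℚ) + 1 ≠ 0 := by positivity
    have hk2 : (k : ℚ) + 2 ≠ 0 := by positivity
    have hk3 : (k : ℚ) + 3 ≠ 0 := by positivity
    have hkl : (k : ℚ) + l + 4 ≠ 0 := by positivity
    have hf1 : (k.factorial : ℚ) ≠ 0 := by positivity
    have hf2 : ((l + 3).factorial : ℚ) ≠ 0 := by positivity
    field_simp
  rw [Finset.sum_congr rfl hterm, ← Finset.mul_sum, aux2 j k (by omega), mul_zero]
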